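/- Let C ⊆ ℝᵐ ∖ {0} be a cone, F : C → [0,∞), and let τ : ℝᵐ × ℝ → ℝ be C¹ with dτ_P(w) > 0 for every P ∈ ℝᵐ × ℝ and every w ∈ C^↓. Let U ⊆ ℝᵐ be open, c ∈ ℝ, and t : U → ℝ a C¹ function whose graph lies in the level set of τ, i.e. τ(p, t(p)) = c for all p ∈ U. Then t is strictly F-steep: dt_p(y) > F(y) for every p ∈ U and y ∈ C. -/

import Mathlib

/-- Let `C ⊆ ℝᵐ ∖ {0}` be a cone, `F : C → [0,∞)`, and `τ : ℝᵐ × ℝ → ℝ` a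
`C¹` function with `dτ_P(w) > 0` for every `P` and every `w ∈ C^↓`.  Let `U ⊆ ℝᵐ` be
open, `c ∈ ℝ`, and `t : U → ℝ` a `C¹` function whose graph lies in the level set
`τ = c`.  Then `t` is strictly `F`-steep: `dt_p(y) > F y` for every `p ∈ U`, `y ∈ C`. -/
theorem stmt_9 {m : ℕ} (C : Set (EuclideanSpace ℝ (Fin m)))
    (hC0 : (0 : EuclideanSpace ℝ (Fin m)) ∉ C) (hCne : C.Nonempty)
    (hcone : ∀ y ∈ C, ∀ l : ℝ, 0 < l → l • y ∈ C)
    (F : EuclideanSpace ℝ (Fin m) → ℝ) (hFnn : ∀ y ∈ C, 0 ≤ F y)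
    (τ : EuclideanSpace ℝ (Fin m) × ℝ → ℝ) (hτ : ContDiff ℝ 1 τ)
    (hτpos : ∀ P : EuclideanSpace ℝ (Fin m) × ℝ,
      ∀ w ∈ ({w | w.1 ∈ C ∧ w.2 ≤ F w.1} ∪ {w | w.1 = 0 ∧ w.2 < 0} :
        Set (EuclideanSpace ℝ (Fin m) × ℝ)), 0 < fderiv ℝ τ P w)
    (U : Set (EuclideanSpace ℝ (Fin m))) (hU : IsOpen U) (c : ℝ)
    (t : EuclideanSpace ℝ (Fin m) → ℝ) (ht : ContDiffOn ℝ 1 t U)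
    (hgraph : ∀ p ∈ U, τ (p, t p) = c) :
    ∀ p ∈ U, ∀ y ∈ C, F y < fderivWithin ℝ t U p y := by
  intro p hp y hy
  set L := fderivWithin ℝ t U p with hL
  have htd : HasFDerivWithinAt t L U p :=
    ((ht.differentiableOn one_ne_zero) p hp).hasFDerivWithinAt
  have hφ : HasFDerivWithinAt (fun q => (q, t q))
      ((ContinuousLinearMap.id ℝ (EuclideanSpace ℝ (Fin m))).prod L) U p :=
    HasFDerivWithinAt.prodMk (hasFDerivWithinAt_id p U) htd
  have hτd : HasFDerivAt τ (fderiv ℝ τ (p, t p)) (p, t p) :=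
    (hτ.differentiable one_ne_zero (p, t p)).hasFDerivAt
  have hcomp : HasFDerivWithinAt (fun q => τ (q, t q))
      ((fderiv ℝ τ (p, t p)).comp
        ((ContinuousLinearMap.id ℝ (EuclideanSpace ℝ (Fin m))).prod L)) U p :=
    hτd.comp_hasFDerivWithinAt p hφ
  have hconst : HasFDerivWithinAt (fun q => τ (q, t q))
      (0 : EuclideanSpace ℝ (Fin m) →L[ℝ] ℝ) U p := by
    have : HasFDerivWithinAt (fun _ : EuclideanSpace ℝ (Fin m) => c)
        (0 : EuclideanSpace ℝ (Fin m) →L[ℝ] ℝ) U p := hasFDerivWithinAt_const c p U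
    exact this.congr (fun q hq => hgraph q hq) (hgraph p hp)
  have huniq : (fderiv ℝ τ (p, t p)).comp
      ((ContinuousLinearMap.id ℝ (EuclideanSpace ℝ (Fin m))).prod L)
      = (0 : EuclideanSpace ℝ (Fin m) →L[ℝ] ℝ) :=
    (hU.uniqueDiffWithinAt hp).eq hcomp hconst
  have hzero : fderiv ℝ τ (p, t p) (y, L y) = 0 := by
    have := congrArg (fun f : EuclideanSpace ℝ (Fin m) →L[ℝ] ℝ => f y) huniq
    simpa using this
  by_contra h
  push_neg at h
  have hmem : ((y, L y) : EuclideanSpace ℝ (Fin m) × ℝ) ∈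
      ({w | w.1 ∈ C ∧ w.2 ≤ F w.1} ∪ {w | w.1 = 0 ∧ w.2 < 0} :
        Set (EuclideanSpace ℝ (Fin m) × ℝ)) := Or.inl ⟨hy, h⟩
  have := hτpos (p, t p) _ hmem
  linarith [hzero ▸ this]
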